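/- If γ_c : [0,1]^k → ℝ is monotone nondecreasing in each coordinate and Π_i(θ) is stochastically no smaller than Uniform(0,1) for each i (P(Π_i(θ) ≤ α) ≤ α), with the Π_i independent, then F(γ_c(Π_1(θ),...,Π_k(θ))) satisfies P(·≤ α) ≤ α for all α ∈ [0,1], where F is the CDF of γ_c evaluated at independent exact Uniform(0,1) variables. -/

import Mathlib

open MeasureTheory ProbabilityTheory

noncomputable abbrev fusionLam : Measure ℝ := volume.restrict (Set.Icc (0:ℝ) 1)

instance : IsProbabilityMeasure fusionLam :=
  ⟨by simp [Real.volume_Icc]⟩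

lemma fusionLam_Iic {a : ℝ} (ha : a ∈ Set.Icc (0:ℝ) 1) :
    fusionLam (Set.Iic a) = ENNReal.ofReal a := by
  rw [fusionLam, Measure.restrict_apply measurableSet_Iic]
  have h : Set.Iic a ∩ Set.Icc 0 1 = Set.Icc 0 a := by
    ext x; simp only [Set.mem_inter_iff, Set.mem_Iic, Set.mem_Icc]
    constructor
    · rintro ⟨h1, h2, _⟩; exact ⟨h2, h1⟩
    · rintro ⟨h1, h2⟩; exact ⟨h2, h1, h2.trans ha.2⟩
  rw [h, Real.volume_Icc, sub_zero]

lemma fusion_ray_cases {g : ℝ → ℝ} (hg : Continuous g) (hmono : Monotone g) (t : ℝ) :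
    {x | g x ≤ t} = ∅ ∨ {x | g x ≤ t} = Set.univ ∨ ∃ c, {x | g x ≤ t} = Set.Iic c := by
  set S := {x | g x ≤ t} with hS
  by_cases hne : S.Nonempty
  · by_cases hbdd : BddAbove S
    · right; right
      have hcl : IsClosed S := isClosed_le hg continuous_const
      have hc : sSup S ∈ S := hcl.csSup_mem hne hbdd
      refine ⟨sSup S, ?_⟩
      ext x
      simp only [hS, Set.mem_setOf_eq, Set.mem_Iic]
      constructor
      · intro hx; exact le_csSup hbdd hx
      · intro hx; exact le_trans (hmono hx) hc
    · right; left
      ext x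
      simp only [hS, Set.mem_setOf_eq, Set.mem_univ, iff_true]
      obtain ⟨y, hy, hxy⟩ := not_bddAbove_iff.mp hbdd x
      exact le_trans (hmono hxy.le) hy
  · left; exact Set.not_nonempty_iff_eq_empty.mp hne

lemma fusion_ray_le (m : Measure ℝ) [IsProbabilityMeasure m]
    (hm : ∀ a, m (Set.Iic a) ≤ fusionLam (Set.Iic a))
    {g : ℝ → ℝ} (hg : Continuous g) (hmono : Monotone g) (t : ℝ) :
    m {x | g x ≤ t} ≤ fusionLam {x | g x ≤ t} := by
  rcases fusion_ray_cases hg hmono t with h | h | ⟨c, h⟩ <;> rw [h]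
  · simp
  · simp
  · exact hm c

lemma fusion_key : ∀ (n : ℕ) (m : Fin n → Measure ℝ),
    (∀ i, IsProbabilityMeasure (m i)) →
    (∀ i a, m i (Set.Iic a) ≤ fusionLam (Set.Iic a)) →
    ∀ (γ : (Fin n → ℝ) → ℝ), Continuous γ →
    (∀ x y, (∀ i, x i ≤ y i) → γ x ≤ γ y) → ∀ t : ℝ,
    Measure.pi m {x | γ x ≤ t} ≤ Measure.pi (fun _ => fusionLam) {x | γ x ≤ t} := by
  intro n
  induction n with
  | zero =>
    intro m hp hm γ hc hmono t
    haveI : ∀ i, IsProbabilityMeasure (m i) := hp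
    rw [Measure.pi_of_empty m, Measure.pi_of_empty (fun _ => fusionLam)]
  | succ n ih =>
    intro m hp hm γ hc hmono t
    haveI : ∀ i, IsProbabilityMeasure (m i) := hp
    set S : Set (Fin (n+1) → ℝ) := {x | γ x ≤ t} with hSdef
    set A : Set (ℝ × (Fin n → ℝ)) := {p | γ (Fin.cons p.1 p.2) ≤ t} with hAdef
    have hconsM : Measurable
        (fun p : ℝ × (Fin n → ℝ) => (Fin.cons p.1 p.2 : Fin (n+1) → ℝ)) := by
      rw [measurable_pi_iff]
      intro i
      refine Fin.cases ?_ ?_ i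
      · simpa using measurable_fst
      · intro j; simpa [Function.comp_def] using (measurable_pi_apply j).comp measurable_snd
    have hAm : MeasurableSet A :=
      (hc.measurable.comp hconsM) measurableSet_Iic
    have hconsC : ∀ x : ℝ,
        Continuous (fun y : Fin n → ℝ => (Fin.cons x y : Fin (n+1) → ℝ)) := by
      intro x
      apply continuous_pi
      intro i
      refine Fin.cases ?_ ?_ i
      · simpa using continuous_const
      · intro j; simpa using continuous_apply j
    have hconsC' : ∀ y : Fin n → ℝ,
        Continuous (fun x : ℝ => (Fin.cons x y : Fin (n+1) → ℝ)) := by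
      intro y
      apply continuous_pi
      intro i
      refine Fin.cases ?_ ?_ i
      · simpa using continuous_id'
      · intro j; simpa using continuous_const
    have hEA : (MeasurableEquiv.piFinSuccAbove (fun _ : Fin (n+1) => ℝ) 0) ⁻¹' A = S := by
      ext f
      have hf : (Fin.cons (f 0) (Fin.removeNth 0 f) : Fin (n+1) → ℝ) = f := by
        funext i
        refine Fin.cases ?_ ?_ i
        · simp
        · intro j
          simp only [Fin.cons_succ]
          show f ((0 : Fin (n+1)).succAbove j) = f j.succ
          rw [Fin.zero_succAbove]
      simp only [Set.mem_preimage, hAdef, Set.mem_setOf_eq, hSdef,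
        MeasurableEquiv.piFinSuccAbove_apply, Fin.insertNthEquiv_symm_apply,
        Fin.removeNth, hf]
    have h1 : Measure.pi m S
        = ((m 0).prod (Measure.pi fun j => m ((0 : Fin (n+1)).succAbove j))) A := by
      rw [← hEA]
      exact (measurePreserving_piFinSuccAbove m 0).measure_preimage hAm.nullMeasurableSet
    have h4 : Measure.pi (fun _ : Fin (n+1) => fusionLam) S
        = (fusionLam.prod (Measure.pi fun _ : Fin n => fusionLam)) A := by
      rw [← hEA]
      exact (measurePreserving_piFinSuccAbove (fun _ => fusionLam) 0).measure_preimage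
        hAm.nullMeasurableSet
    have step1 : ((m 0).prod (Measure.pi fun j => m ((0 : Fin (n+1)).succAbove j))) A
        ≤ ((m 0).prod (Measure.pi fun _ : Fin n => fusionLam)) A := by
      rw [Measure.prod_apply hAm, Measure.prod_apply hAm]
      refine lintegral_mono fun x => ?_
      have := ih (fun j => m ((0 : Fin (n+1)).succAbove j)) (fun j => hp _)
        (fun j a => hm _ a) (fun y => γ (Fin.cons x y)) (hc.comp (hconsC x))
        (fun y y' h => hmono _ _ (fun i => by
          refine Fin.cases ?_ ?_ i
          · simp
          · intro j; simpa using h j)) t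
      exact this
    have step2 : ((m 0).prod (Measure.pi fun _ : Fin n => fusionLam)) A
        ≤ (fusionLam.prod (Measure.pi fun _ : Fin n => fusionLam)) A := by
      rw [Measure.prod_apply_symm hAm, Measure.prod_apply_symm hAm]
      refine lintegral_mono fun y => ?_
      exact fusion_ray_le (m 0) (hm 0) (hc.comp (hconsC' y))
        (fun x x' h => hmono _ _ (fun i => by
          refine Fin.cases ?_ ?_ i
          · simpa using h
          · intro j; simp)) t
    rw [h1, h4]
    exact le_trans step1 step2

theorem fusion_validity_just_valid_case
    {Ω : Type*} [MeasurableSpace Ω] (μ : Measure Ω) [IsProbabilityMeasure μ]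
    (k : ℕ) (P : Fin k → Ω → ℝ)
    (hmeas : ∀ i, Measurable (P i))
    (hindep : iIndepFun P μ)
    (hranges : ∀ i ω, P i ω ∈ Set.Icc (0:ℝ) 1)
    (hval : ∀ i, ∀ α ∈ Set.Icc (0:ℝ) 1, μ {ω | P i ω ≤ α} ≤ ENNReal.ofReal α)
    (γ : (Fin k → ℝ) → ℝ) (hγcont : Continuous γ)
    (hγmono : ∀ x y : Fin k → ℝ, (∀ i, x i ≤ y i) → γ x ≤ γ y)
    (F : ℝ → ℝ)
    (hF : ∀ t, F t =
      ((Measure.pi fun _ : Fin k => volume.restrict (Set.Icc (0:ℝ) 1))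
        {x | γ x ≤ t}).toReal) :
    ∀ α ∈ Set.Icc (0:ℝ) 1,
      μ {ω | F (γ fun i => P i ω) ≤ α} ≤ ENNReal.ofReal α := by
  intro α hα
  set ν : Fin k → Measure ℝ := fun i => μ.map (P i) with hνdef
  have hνprob : ∀ i, IsProbabilityMeasure (ν i) := fun i =>
    Measure.isProbabilityMeasure_map (hmeas i).aemeasurable
  haveI := hνprob
  -- marginal domination
  have hνIic : ∀ i a, ν i (Set.Iic a) ≤ fusionLam (Set.Iic a) := by
    intro i a
    rw [hνdef]
    rw [Measure.map_apply (hmeas i) measurableSet_Iic]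
    rcases lt_or_ge a 0 with h0 | h0
    · have : P i ⁻¹' Set.Iic a = ∅ := by
        ext ω
        simp only [Set.mem_preimage, Set.mem_Iic, Set.mem_empty_iff_false, iff_false, not_le]
        exact lt_of_lt_of_le h0 (hranges i ω).1
      rw [this]; simp
    · rcases le_or_gt a 1 with h1 | h1
      · rw [fusionLam_Iic ⟨h0, h1⟩]
        exact hval i a ⟨h0, h1⟩
      · calc μ (P i ⁻¹' Set.Iic a) ≤ 1 := prob_le_one
          _ = fusionLam (Set.Iic 1) := by
              rw [fusionLam_Iic ⟨zero_le_one, le_refl 1⟩, ENNReal.ofReal_one]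
          _ ≤ fusionLam (Set.Iic a) := measure_mono (Set.Iic_subset_Iic.mpr h1.le)
  -- joint law is the product of marginals
  have hjointM : Measurable (fun ω => fun i => P i ω) := measurable_pi_iff.mpr hmeas
  have hmap : μ.map (fun ω => fun i => P i ω) = Measure.pi ν := by
    refine (Measure.pi_eq ?_).symm
    intro s hs
    rw [Measure.map_apply hjointM (MeasurableSet.univ_pi hs)]
    have hpre : (fun ω => fun i => P i ω) ⁻¹' Set.pi Set.univ s
        = ⋂ i ∈ Finset.univ, P i ⁻¹' s i := by
      ext ω; simp [Set.mem_pi]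
    rw [hpre, hindep.measure_inter_preimage_eq_mul Finset.univ (fun i _ => hs i)]
    refine Finset.prod_congr rfl fun i _ => ?_
    rw [hνdef, Measure.map_apply (hmeas i) (hs i)]
  -- F is monotone, hence measurable
  have hFmono : Monotone F := by
    intro s u hsu
    rw [hF s, hF u]
    refine ENNReal.toReal_mono (measure_ne_top _ _) ?_
    exact measure_mono fun x hx => le_trans hx hsu
  have hBm : MeasurableSet {x : Fin k → ℝ | F (γ x) ≤ α} :=
    (hFmono.measurable.comp hγcont.measurable) measurableSet_Iic
  have hμB : μ {ω | F (γ fun i => P i ω) ≤ α}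
      = Measure.pi ν {x | F (γ x) ≤ α} := by
    rw [← hmap, Measure.map_apply hjointM hBm]
    rfl
  rw [hμB]
  -- key bound for each threshold t with F t ≤ α
  have hkey : ∀ t : ℝ, F t ≤ α → Measure.pi ν {x | γ x ≤ t} ≤ ENNReal.ofReal α := by
    intro t ht
    refine le_trans (fusion_key k ν hνprob hνIic γ hγcont hγmono t) ?_
    have hlam : Measure.pi (fun _ : Fin k => fusionLam) {x | γ x ≤ t}
        = ENNReal.ofReal (F t) := by
      rw [hF t, ENNReal.ofReal_toReal (measure_ne_top _ _)]
    rw [hlam]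
    exact ENNReal.ofReal_le_ofReal ht
  set T : Set ℝ := {s | F s ≤ α} with hTdef
  have hTlow : ∀ s u : ℝ, s ≤ u → u ∈ T → s ∈ T := fun s u hsu hu =>
    le_trans (hFmono hsu) hu
  by_cases hTne : T.Nonempty
  · by_cases hbdd : BddAbove T
    · set c := sSup T with hc
      by_cases hcT : c ∈ T
      · refine le_trans (measure_mono ?_) (hkey c hcT)
        intro x hx
        exact le_csSup hbdd hx
      · -- T ⊆ Iio c, and every s < c belongs to T
        have hlt : ∀ s : ℝ, s < c → s ∈ T := by
          intro s hs
          obtain ⟨u, hu, hsu⟩ := exists_lt_of_lt_csSup hTne hs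
          exact hTlow s u hsu.le hu
        have hsub : {x : Fin k → ℝ | F (γ x) ≤ α}
            ⊆ ⋃ n : ℕ, {x | γ x ≤ c - 1/(n+1)} := by
          intro x hx
          have hxc : γ x < c := by
            rcases lt_or_eq_of_le (le_csSup hbdd hx) with h | h
            · exact h
            · exact absurd (show c ∈ T by rw [hc, ← h]; exact hx) hcT
          obtain ⟨n, hn⟩ := exists_nat_one_div_lt (sub_pos.mpr hxc)
          refine Set.mem_iUnion.mpr ⟨n, ?_⟩
          have : (1 : ℝ)/(n+1) < c - γ x := hn
          simp only [Set.mem_setOf_eq]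
          linarith
        refine le_trans (measure_mono hsub) ?_
        have hmonoseq : Monotone (fun n : ℕ => {x : Fin k → ℝ | γ x ≤ c - 1/(n+1)}) := by
          intro a b hab x hx
          simp only [Set.mem_setOf_eq] at hx ⊢
          have hcast : (a:ℝ) + 1 ≤ (b:ℝ) + 1 := by exact_mod_cast Nat.succ_le_succ hab
          have h1 : (1:ℝ)/(b+1) ≤ 1/(a+1) :=
            one_div_le_one_div_of_le (by positivity) hcast
          linarith
        rw [Directed.measure_iUnion hmonoseq.directed_le]
        refine iSup_le fun n => ?_
        refine hkey _ (hlt _ ?_)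
        have : (0:ℝ) < 1/(n+1) := by positivity
        linarith
    · -- T unbounded above: F t ≤ α for all t
      have hallT : ∀ s : ℝ, s ∈ T := by
        intro s
        obtain ⟨u, hu, hsu⟩ := not_bddAbove_iff.mp hbdd s
        exact hTlow s u hsu.le hu
      have hsub : {x : Fin k → ℝ | F (γ x) ≤ α} ⊆ ⋃ n : ℕ, {x | γ x ≤ n} := by
        intro x _
        obtain ⟨n, hn⟩ := exists_nat_ge (γ x)
        exact Set.mem_iUnion.mpr ⟨n, hn⟩
      refine le_trans (measure_mono hsub) ?_
      have hmonoseq : Monotone (fun n : ℕ => {x : Fin k → ℝ | γ x ≤ n}) := by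
        intro a b hab x hx
        simp only [Set.mem_setOf_eq] at hx ⊢
        exact le_trans hx (by exact_mod_cast hab)
      rw [Directed.measure_iUnion hmonoseq.directed_le]
      exact iSup_le fun n => hkey _ (hallT _)
  · -- T empty: the event is empty
    have hempty : {x : Fin k → ℝ | F (γ x) ≤ α} = ∅ := by
      ext x
      simp only [Set.mem_setOf_eq, Set.mem_empty_iff_false, iff_false]
      intro hx
      exact hTne ⟨γ x, hx⟩
    rw [hempty]
    simp
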